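/- There exist functions $\Phi \in C^\infty_b(\mathbb{R})$ (smooth, bounded with all derivatives bounded) and $\phi \in C_0^\infty(\mathbb{R})$ (smooth, compactly supported) such that $\phi(0) = 1$, $\phi \geq 0$, and $\phi^2 = (\Phi^2)'$. -/
import Mathlib

open MeasureTheory intervalIntegral
open scoped ContDiff

/-- If `g` has compact support, so do all its iterated derivatives. -/
lemma hasCompactSupport_iteratedDeriv {g : ℝ → ℝ} (hg : HasCompactSupport g) :
    ∀ n : ℕ, HasCompactSupport (iteratedDeriv n g)
  | 0 => by simpa [iteratedDeriv_zero] using hg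
  | (n+1) => by
    rw [iteratedDeriv_succ]
    exact (hasCompactSupport_iteratedDeriv hg n).deriv

/-- There exist `Φ ∈ C^∞_b(ℝ)` (smooth with all derivatives bounded) and
`φ ∈ C_0^∞(ℝ)` (smooth, compactly supported) with `φ(0) = 1`, `φ ≥ 0`, and
`φ² = (Φ²)'`. -/
theorem exists_phi_sq_eq_deriv_sq :
    ∃ Φ φ : ℝ → ℝ,
      ContDiff ℝ (⊤ : ℕ∞) Φ ∧
      (∀ n : ℕ, ∃ C : ℝ, ∀ x : ℝ, |iteratedDeriv n Φ x| ≤ C) ∧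
      ContDiff ℝ (⊤ : ℕ∞) φ ∧ HasCompactSupport φ ∧
      φ 0 = 1 ∧ (∀ x, 0 ≤ φ x) ∧
      ∀ x, (φ x) ^ 2 = deriv (fun y => (Φ y) ^ 2) x := by
  set f : ContDiffBump (0 : ℝ) := ⟨1, 2, one_pos, one_lt_two⟩ with hf
  set φ : ℝ → ℝ := fun x => f x with hφ
  have hφc : ContDiff ℝ (⊤ : ℕ∞) φ := f.contDiff
  have hφsupp : HasCompactSupport φ := f.hasCompactSupport
  have hφ0 : φ 0 = 1 := f.one_of_mem_closedBall (by simp [hf])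
  have hφnn : ∀ x, 0 ≤ φ x := f.nonneg'
  -- the squared bump
  set g : ℝ → ℝ := fun x => φ x ^ 2 with hg
  have hgc : Continuous g := hφc.continuous.pow 2
  have hgsm : ContDiff ℝ (⊤ : ℕ∞) g := hφc.pow 2
  have hgnn : ∀ x, 0 ≤ g x := fun x => sq_nonneg _
  -- its antiderivative
  set F : ℝ → ℝ := fun x => ∫ t in (-3 : ℝ)..x, g t with hF
  have hint : ∀ a b : ℝ, IntervalIntegrable g volume a b := fun a b =>
    hgc.intervalIntegrable a b
  have hFderiv : ∀ x, HasDerivAt F (g x) x := fun x =>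
    integral_hasDerivAt_right (hint _ _)
      (hgc.stronglyMeasurableAtFilter _ _) hgc.continuousAt
  have hFdiff : Differentiable ℝ F := fun x => (hFderiv x).differentiableAt
  have hFd : deriv F = g := funext fun x => (hFderiv x).deriv
  have hFsmooth : ContDiff ℝ (⊤ : ℕ∞) F := by
    have : ContDiff ℝ ∞ F := contDiff_infty_iff_deriv.2 ⟨hFdiff, by rw [hFd]; exact hgsm⟩
    exact this
  -- F is nonnegative and bounded
  have hFmono : Monotone F := by
    intro a b hab
    have h3 : F a + ∫ t in a..b, g t = F b :=
      intervalIntegral.integral_add_adjacent_intervals (hint _ _) (hint _ _)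
    have h2 : 0 ≤ ∫ t in a..b, g t :=
      intervalIntegral.integral_nonneg hab fun x _ => hgnn x
    linarith
  have hFnn : ∀ x, 0 ≤ F x := by
    intro x
    rcases le_total (-3 : ℝ) x with h | h
    · exact intervalIntegral.integral_nonneg h fun t _ => hgnn t
    · -- x ≤ -3 : integrand vanishes on [x, -3]
      have hzero : ∀ t ∈ Set.uIcc x (-3 : ℝ), g t = 0 := by
        intro t ht
        have ht' : t ≤ -2 := by
          rcases Set.mem_uIcc.1 ht with ⟨_, h2⟩ | ⟨_, h2⟩ <;> linarith
        have : φ t = 0 := f.zero_of_le_dist (by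
          rw [Real.dist_eq, sub_zero]
          simp only [hf]
          rw [abs_of_nonpos (by linarith)]; linarith)
        simp [hg, this]
      have : F x = ∫ t in (-3 : ℝ)..x, (0 : ℝ) := by
        apply intervalIntegral.integral_congr
        intro t ht
        exact hzero t (by rwa [Set.uIcc_comm] at ht)
      simp [this]
  have hFbdd : ∀ x, F x ≤ F 3 := by
    intro x
    rcases le_total x 3 with h | h
    · exact hFmono h
    · -- x ≥ 3 : F x = F 3
      have h3 : F 3 + ∫ t in (3 : ℝ)..x, g t = F x :=
        intervalIntegral.integral_add_adjacent_intervals (hint _ _) (hint _ _)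
      have hzero : ∀ t ∈ Set.uIcc (3 : ℝ) x, g t = 0 := by
        intro t ht
        have ht' : (2 : ℝ) ≤ t := by
          rcases Set.mem_uIcc.1 ht with ⟨h1, _⟩ | ⟨_, h2⟩ <;> linarith
        have : φ t = 0 := f.zero_of_le_dist (by
          rw [Real.dist_eq, sub_zero]
          simp only [hf]
          rw [abs_of_nonneg (by linarith)]; linarith)
        simp [hg, this]
      have h0 : ∫ t in (3 : ℝ)..x, g t = 0 := by
        rw [intervalIntegral.integral_congr hzero]
        simp
      linarith
  -- Φ = sqrt (1 + F)
  set Φ : ℝ → ℝ := fun x => Real.sqrt (1 + F x) with hΦ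
  have h1F : ∀ x, (0 : ℝ) < 1 + F x := fun x => by have := hFnn x; linarith
  have hΦsq : ∀ x, Φ x ^ 2 = 1 + F x := fun x =>
    Real.sq_sqrt (h1F x).le
  have hΦsmooth : ContDiff ℝ (⊤ : ℕ∞) Φ := by
    rw [contDiff_iff_contDiffAt]
    intro x
    exact (Real.contDiffAt_sqrt (h1F x).ne').comp x
      ((contDiff_const.add hFsmooth).contDiffAt)
  have hΦderiv : ∀ x, HasDerivAt Φ (1 / (2 * Real.sqrt (1 + F x)) * g x) x := by
    intro x
    exact (Real.hasDerivAt_sqrt (h1F x).ne').comp x ((hFderiv x).const_add 1)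
  -- derivative identity
  have hkey : ∀ x, (φ x) ^ 2 = deriv (fun y => (Φ y) ^ 2) x := by
    intro x
    have : (fun y => (Φ y) ^ 2) = fun y => 1 + F y := funext fun y => hΦsq y
    rw [this]
    rw [deriv_const_add]
    rw [hFd]
  -- bounded derivatives
  have hΦd : deriv Φ = fun x => 1 / (2 * Real.sqrt (1 + F x)) * g x :=
    funext fun x => (hΦderiv x).deriv
  have hΦdsupp : HasCompactSupport (deriv Φ) := by
    apply HasCompactSupport.intro (isCompact_Icc (a := (-2 : ℝ)) (b := 2))
    intro x hx
    have : φ x = 0 := by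
      apply f.zero_of_le_dist
      rw [Real.dist_eq, sub_zero]
      simp only [hf]
      simp only [Set.mem_Icc, not_and_or, not_le] at hx
      rcases hx with h | h
      · rw [abs_of_nonpos (by linarith)]; linarith
      · rw [abs_of_nonneg (by linarith)]; linarith
    rw [hΦd]
    simp [hg, this]
  have hbdd : ∀ n : ℕ, ∃ C : ℝ, ∀ x : ℝ, |iteratedDeriv n Φ x| ≤ C := by
    intro n
    match n with
    | 0 =>
      refine ⟨Real.sqrt (1 + F 3), fun x => ?_⟩
      rw [iteratedDeriv_zero]
      rw [abs_of_nonneg (Real.sqrt_nonneg _)]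
      exact Real.sqrt_le_sqrt (by have := hFbdd x; linarith)
    | (n+1) =>
      have hsupp : HasCompactSupport (iteratedDeriv (n+1) Φ) := by
        rw [iteratedDeriv_succ']
        exact hasCompactSupport_iteratedDeriv hΦdsupp n
      have hcont : Continuous (iteratedDeriv (n+1) Φ) :=
        hΦsmooth.continuous_iteratedDeriv (n+1) (by exact_mod_cast le_top)
      obtain ⟨C, hC⟩ := hsupp.exists_bound_of_continuous hcont
      exact ⟨C, fun x => by simpa [Real.norm_eq_abs] using hC x⟩
  exact ⟨Φ, φ, hΦsmooth, hbdd, hφc, hφsupp, hφ0, hφnn, hkey⟩
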